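/- Let G be a connected simple graph with degree sequence 1 < d₁ ≤ d₂ ≤ … ≤ dₙ, and let t(G) be the number of spanning trees of G. Then t(G) ≤ (∏ᵢ dᵢ)/(n−1). -/

import Mathlib

open SimpleGraph Walk

namespace KostochkaAux

variable {V : Type*} {T : SimpleGraph V}

/-- The chosen (unique) path between two vertices of a tree. -/
noncomputable def pth (hT : T.IsTree) (v a : V) : T.Walk v a :=
  (hT.existsUnique_path v a).choose

lemma pth_isPath (hT : T.IsTree) (v a : V) : (pth hT v a).IsPath :=
  (hT.existsUnique_path v a).choose_spec.1

lemma pth_unique (hT : T.IsTree) {v a : V} {p : T.Walk v a} (hp : p.IsPath) :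
    p = pth hT v a :=
  (hT.existsUnique_path v a).choose_spec.2 p hp

/-- The "parent" of `v` towards the root `a` (with `par a = b`). -/
noncomputable def par (hT : T.IsTree) (a b v : V) : V :=
  @ite _ (v = a) (Classical.propDecidable _) b ((pth hT v a).getVert 1)

lemma par_eq_of_ne (hT : T.IsTree) {a v : V} (b : V) (h : v ≠ a) :
    par hT a b v = (pth hT v a).getVert 1 := by
  unfold par; rw [if_neg h]

lemma par_self (hT : T.IsTree) (a b : V) : par hT a b a = b := by
  unfold par; rw [if_pos rfl]

lemma pth_not_nil (hT : T.IsTree) {v a : V} (h : v ≠ a) : ¬ (pth hT v a).Nil :=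
  Walk.not_nil_of_ne h

lemma adj_par (hT : T.IsTree) {a b : V} (hab : T.Adj a b) (v : V) :
    T.Adj v (par hT a b v) := by
  by_cases h : v = a
  · subst h; rw [par_self]; exact hab
  · rw [par_eq_of_ne hT b h]
    exact Walk.adj_snd (pth_not_nil hT h)

/-- If `v` is adjacent to the root `a`, then its parent is `a`. -/
lemma par_eq_root (hT : T.IsTree) {a v : V} (b : V) (h : T.Adj v a) :
    par hT a b v = a := by
  rw [par_eq_of_ne hT b h.ne]
  have hp : (Walk.cons h Walk.nil).IsPath := by
    rw [Walk.cons_isPath_iff]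
    exact ⟨Walk.IsPath.nil, by simp [h.ne]⟩
  rw [← pth_unique hT hp]
  rfl

/-- In a path starting at `x`, an edge containing `x` must be the first edge. -/
lemma getVert_one_of_edge {x z w : V} (p : T.Walk x z) (hp : p.IsPath)
    (he : s(x, w) ∈ p.edges) : p.getVert 1 = w := by
  cases p with
  | nil => simp at he
  | @cons _ u _ h q =>
    rw [Walk.edges_cons, List.mem_cons] at he
    rcases he with he | he
    · rcases Sym2.eq_iff.mp he with ⟨-, h2⟩ | ⟨h1, -⟩
      · simp [Walk.getVert_cons_succ, Walk.getVert_zero, h2]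
      · exact absurd h1 h.ne
    · exact absurd (Walk.fst_mem_support_of_mem_edges q he)
        ((Walk.cons_isPath_iff _ _).1 hp).2

/-- Key dichotomy: for an edge `{x, y}` of the tree with both endpoints away from
the root, one endpoint is the parent of the other. -/
lemma par_dichotomy (hT : T.IsTree) {a x y : V} (b : V) (hxy : T.Adj x y)
    (hx : x ≠ a) (hy : y ≠ a) :
    par hT a b x = y ∨ par hT a b y = x := by
  classical
  by_cases hmem : y ∈ (pth hT x a).support
  · left
    have hq : ((pth hT x a).takeUntil y hmem).IsPath :=
      (pth_isPath hT x a).takeUntil hmem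
    have hlen : ((pth hT x a).takeUntil y hmem).length = 1 := by
      by_contra hne1
      rcases Nat.lt_or_ge ((pth hT x a).takeUntil y hmem).length 2 with h2 | h2
      · have h0 : ((pth hT x a).takeUntil y hmem).length = 0 := by omega
        exact hxy.ne (Walk.eq_of_length_eq_zero h0)
      · have hedge : s(y, x) ∉ ((pth hT x a).takeUntil y hmem).edges := by
          intro hin
          have h1 := getVert_one_of_edge _ hq (by rwa [Sym2.eq_swap] at hin)
          have hnq : ¬ ((pth hT x a).takeUntil y hmem).Nil :=
            Walk.not_nil_of_ne hxy.ne
          have hpath : (((pth hT x a).takeUntil y hmem).tail.copy h1 rfl).IsPath :=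
            (Walk.isPath_copy _ _ _).mpr (hq.tail)
          have h3 := Walk.isPath_iff_eq_nil.mp hpath
          have hl0 : ((pth hT x a).takeUntil y hmem).tail.length = 0 := by
            simpa using congrArg Walk.length h3
          have := Walk.length_tail_add_one hnq
          omega
        exact hT.IsAcyclic _ ((Walk.cons_isCycle_iff _ hxy.symm).2 ⟨hq, hedge⟩)
    rw [par_eq_of_ne hT b hx]
    have hspec := Walk.take_spec (pth hT x a) hmem
    have h4 := congrArg (fun w => Walk.getVert w 1) hspec
    rw [← h4, Walk.getVert_append, hlen]
    simp
  · right
    have hp : (Walk.cons hxy.symm (pth hT x a)).IsPath := by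
      rw [Walk.cons_isPath_iff]
      exact ⟨pth_isPath hT x a, hmem⟩
    rw [par_eq_of_ne hT b hy, ← pth_unique hT hp]
    simp [Walk.getVert_cons_succ]

/-- The only "2-cycle" of the parent function is the marked edge `{a, b}`. -/
lemma par_two_cycle (hT : T.IsTree) {a b u w : V} (hab : T.Adj a b)
    (hu : par hT a b u = w) (hw : par hT a b w = u) : s(u, w) = s(a, b) := by
  by_cases hua : u = a
  · subst hua; rw [par_self] at hu; rw [hu]
  by_cases hwa : w = a
  · subst hwa; rw [par_self] at hw; rw [hw, Sym2.eq_swap]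
  exfalso
  rw [par_eq_of_ne hT b hua] at hu
  rw [par_eq_of_ne hT b hwa] at hw
  have hnp : ¬ (pth hT u a).Nil := pth_not_nil hT hua
  -- `(pth u a).tail` is a path from `w` to `a`, so it is *the* path from `w` to `a`.
  have htail : ((pth hT u a).tail.copy hu rfl).IsPath := by
    simpa using (pth_isPath hT u a).tail
  have heq : (pth hT u a).tail.copy hu rfl = pth hT w a := pth_unique hT htail
  have h2 : (pth hT u a).getVert 2 = u := by
    have h5 := congrArg (fun q => Walk.getVert q 1) heq
    rw [Walk.getVert_copy, Walk.getVert_tail _] at h5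
    rw [h5, hw]
  -- so `u` lies in the support of `(pth u a).tail`, contradicting that it is a path.
  have hu_mem : u ∈ (pth hT u a).tail.support := by
    rcases Nat.lt_or_ge (pth hT u a).tail.length 1 with hl | hl
    · exfalso
      have : (pth hT u a).tail.getVert 1 = a :=
        Walk.getVert_of_length_le _ (by omega)
      rw [Walk.getVert_tail _] at this
      rw [this] at h2
      exact hua h2.symm
    · rw [Walk.mem_support_iff_exists_getVert]
      exact ⟨1, by rw [Walk.getVert_tail _]; exact h2, hl⟩
  have hcons := Walk.cons_tail_eq (pth hT u a) hnp
  have hpp : (pth hT u a).IsPath := pth_isPath hT u a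
  rw [← hcons, Walk.cons_isPath_iff] at hpp
  exact hpp.2 hu_mem

/-- Recovery of the tree's edge set from the parent function. -/
lemma edgeSet_eq_range (hT : T.IsTree) {a b : V} (hab : T.Adj a b) :
    T.edgeSet = Set.range (fun v => s(v, par hT a b v)) := by
  ext e
  constructor
  · intro he
    induction e with
    | h x y =>
      rw [SimpleGraph.mem_edgeSet] at he
      by_cases hx : x = a
      · subst hx
        refine ⟨y, ?_⟩
        show s(y, par hT x b y) = s(x, y)
        rw [par_eq_root hT b he.symm, Sym2.eq_swap]
      by_cases hy : y = a
      · subst hy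
        refine ⟨x, ?_⟩
        show s(x, par hT y b x) = s(x, y)
        rw [par_eq_root hT b he]
      rcases par_dichotomy hT b he hx hy with h | h
      · refine ⟨x, ?_⟩
        show s(x, par hT a b x) = s(x, y)
        rw [h]
      · refine ⟨y, ?_⟩
        show s(y, par hT a b y) = s(x, y)
        rw [h, Sym2.eq_swap]
  · rintro ⟨v, rfl⟩
    exact (adj_par hT hab v)

end KostochkaAux

open KostochkaAux in
/-- Kostochka's upper bound: for a connected simple graph with all degrees `> 1`,
the number of spanning trees satisfies `t(G) ≤ (∏ᵢ dᵢ)/(n−1)`. -/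
theorem stmt_9 {V : Type*} [Fintype V] (G : SimpleGraph V) [DecidableRel G.Adj]
    (hconn : G.Connected) (hmin : ∀ v, 1 < G.degree v) :
    Nat.card {H : SimpleGraph V // H ≤ G ∧ H.IsTree} * (Fintype.card V - 1)
      ≤ ∏ v, G.degree v := by
  classical
  have hne : Nonempty V := hconn.nonempty
  set S := {H : SimpleGraph V // H ≤ G ∧ H.IsTree} with hS
  -- the encoding map
  have key : ∀ (H : S) (e : H.1.edgeSet) (v : V),
      G.Adj v (par H.2.2 (Quot.out e.1).1 (Quot.out e.1).2 v) := by
    rintro ⟨T, hle, hT⟩ ⟨e, he⟩ v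
    have heq : s((Quot.out e).1, (Quot.out e).2) = e := by
      conv_rhs => rw [← Quot.out_eq e]
    have hab : T.Adj (Quot.out e).1 (Quot.out e).2 := by
      rw [← SimpleGraph.mem_edgeSet, heq]; exact he
    exact hle (adj_par hT hab v)
  let Φ : (Σ H : S, H.1.edgeSet) → (∀ v, G.neighborSet v) :=
    fun x v => ⟨par x.1.2.2 (Quot.out x.2.1).1 (Quot.out x.2.1).2 v, key x.1 x.2 v⟩
  have hinj : Function.Injective Φ := by
    rintro ⟨⟨T₁, hle₁, hT₁⟩, ⟨e₁, he₁⟩⟩ ⟨⟨T₂, hle₂, hT₂⟩, ⟨e₂, he₂⟩⟩ h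
    have hfun : ∀ v, par hT₁ (Quot.out e₁).1 (Quot.out e₁).2 v
        = par hT₂ (Quot.out e₂).1 (Quot.out e₂).2 v := by
      intro v
      have := congrFun h v
      exact Subtype.ext_iff.mp this
    have heq₁ : s((Quot.out e₁).1, (Quot.out e₁).2) = e₁ := by
      conv_rhs => rw [← Quot.out_eq e₁]
    have heq₂ : s((Quot.out e₂).1, (Quot.out e₂).2) = e₂ := by
      conv_rhs => rw [← Quot.out_eq e₂]
    have hab₁ : T₁.Adj (Quot.out e₁).1 (Quot.out e₁).2 := by
      rw [← SimpleGraph.mem_edgeSet, heq₁]; exact he₁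
    have hab₂ : T₂.Adj (Quot.out e₂).1 (Quot.out e₂).2 := by
      rw [← SimpleGraph.mem_edgeSet, heq₂]; exact he₂
    have hTeq : T₁ = T₂ := by
      apply SimpleGraph.edgeSet_injective
      rw [edgeSet_eq_range hT₁ hab₁, edgeSet_eq_range hT₂ hab₂]
      exact congrArg Set.range (funext fun v => by rw [hfun v])
    subst hTeq
    have heeq : e₁ = e₂ := by
      rw [← heq₁, ← heq₂]
      apply par_two_cycle hT₂ hab₂ (u := (Quot.out e₁).1) (w := (Quot.out e₁).2)
      · rw [← hfun]; exact par_self hT₁ _ _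
      · rw [← hfun]; exact par_eq_root hT₁ _ hab₁.symm
    subst heeq
    rfl
  -- counting
  have hcard : Nat.card (Σ H : S, H.1.edgeSet) ≤ Nat.card (∀ v, G.neighborSet v) :=
    Nat.card_le_card_of_injective Φ hinj
  have hpi : Nat.card (∀ v, G.neighborSet v) = ∏ v, G.degree v := by
    rw [Nat.card_eq_fintype_card, Fintype.card_pi]
    exact Finset.prod_congr rfl fun v _ => G.card_neighborSet_eq_degree v
  have hedge : ∀ H : S, Fintype.card H.1.edgeSet = Fintype.card V - 1 := by
    rintro ⟨T, hle, hT⟩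
    show Fintype.card T.edgeSet = Fintype.card V - 1
    have h1 := hT.card_edgeFinset
    rw [← SimpleGraph.edgeFinset_card]
    omega
  have hsig : Nat.card (Σ H : S, H.1.edgeSet)
      = Nat.card S * (Fintype.card V - 1) := by
    rw [Nat.card_eq_fintype_card, Fintype.card_sigma, Nat.card_eq_fintype_card]
    calc ∑ H : S, Fintype.card H.1.edgeSet
        = ∑ _H : S, (Fintype.card V - 1) :=
          Finset.sum_congr rfl (fun H _ => hedge H)
      _ = Fintype.card S * (Fintype.card V - 1) := by
          rw [Finset.sum_const, smul_eq_mul, Finset.card_univ]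
  rw [← hpi, ← hsig]
  exact hcard
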